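/- Let K be a field, n a natural number, L a Lie algebra over K with basis b : Basis (Fin n) K L and structure constants c i j k = (b.repr ⁅b i, b j⁆) k. Let A = MvPolynomial (Fin n) K. If P' is any K-bilinear bracket on A that is a derivation in each argument and satisfies P'(X i, X j) = Σ_{k} C (c i j k) * X k for all i, j, then P' equals the structure-constant bracket {f, g} = Σ_{i} Σ_{j} (Σ_{k} C (c i j k) * X k) * (pderiv i f) * (pderiv j g). In particular, there is a unique K-bilinear bracket on A that is a derivation in each argument and restricts on the linear generators to the Lie bracket of L. -/

import Mathlib

open MvPolynomial

/-- Any K-bilinear bracket on the polynomial ring which is a derivation in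
each argument and restricts on the linear generators to the Lie bracket (via the structure
constants) equals the Kostant–Souriau structure-constant bracket; in particular such a
bracket is unique. -/
theorem kostant_souriau_bracket_unique
    {K : Type*} [Field K] {n : ℕ} {L : Type*} [LieRing L] [LieAlgebra K L]
    (b : Module.Basis (Fin n) K L)
    (c : Fin n → Fin n → Fin n → K)
    (hc : ∀ i j k : Fin n, c i j k = (b.repr ⁅b i, b j⁆) k)
    (P' : MvPolynomial (Fin n) K →ₗ[K] MvPolynomial (Fin n) K →ₗ[K] MvPolynomial (Fin n) K)
    (hleib_right : ∀ f g h : MvPolynomial (Fin n) K,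
        P' f (g * h) = P' f g * h + g * P' f h)
    (hleib_left : ∀ f g h : MvPolynomial (Fin n) K,
        P' (f * g) h = P' f h * g + f * P' g h)
    (hgen : ∀ i j : Fin n, P' (X i) (X j) = ∑ k : Fin n, C (c i j k) * X k) :
    ∀ f g : MvPolynomial (Fin n) K,
      P' f g = ∑ i : Fin n, ∑ j : Fin n,
        (∑ k : Fin n, C (c i j k) * X k) * (pderiv i f) * (pderiv j g) := by
  -- bracket vanishes on constants
  have h1r : ∀ f, P' f 1 = 0 := by
    intro f
    have := hleib_right f 1 1
    simp only [mul_one, one_mul] at this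
    exact add_eq_right.mp this.symm
  have h1l : ∀ g, P' (1 : MvPolynomial (Fin n) K) g = 0 := by
    intro g
    have := hleib_left 1 1 g
    simp only [mul_one, one_mul] at this
    exact add_eq_right.mp this.symm
  have hCr : ∀ f a, P' f (C a) = 0 := by
    intro f a
    have : (C a : MvPolynomial (Fin n) K) = a • 1 := by
      simp [smul_eq_C_mul]
    rw [this, map_smul, h1r, smul_zero]
  have hCl : ∀ g a, P' (C a : MvPolynomial (Fin n) K) g = 0 := by
    intro g a
    have : (C a : MvPolynomial (Fin n) K) = a • 1 := by
      simp [smul_eq_C_mul]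
    rw [this, map_smul, LinearMap.smul_apply, h1l, smul_zero]
  -- first: P' f (X j) formula, by induction on f
  have key : ∀ (f : MvPolynomial (Fin n) K) (j : Fin n),
      P' f (X j) = ∑ i : Fin n, (∑ k : Fin n, C (c i j k) * X k) * pderiv i f := by
    intro f
    induction f using MvPolynomial.induction_on with
    | C a => intro j; simp [hCl]
    | add p q hp hq =>
        intro j
        simp only [map_add, LinearMap.add_apply, hp, hq, map_add, mul_add,
          Finset.sum_add_distrib]
    | mul_X p i hp =>
        intro j
        rw [hleib_left p (X i) (X j), hp, hgen i j]
        have hx : ∀ x : Fin n, pderiv x (p * X i)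
            = pderiv x p * X i + p * (if i = x then 1 else 0) := fun x => by
          rw [pderiv_mul, pderiv_X, Pi.single_apply]
        simp_rw [hx, mul_add, ← mul_assoc, mul_ite, mul_one, mul_zero,
          Finset.sum_add_distrib, Finset.sum_ite_eq, Finset.mem_univ, if_true]
        rw [Finset.sum_mul]
        ring
  intro f g
  induction g using MvPolynomial.induction_on with
  | C a => simp [hCr]
  | add p q hp hq =>
      simp only [map_add, hp, hq, mul_add, Finset.sum_add_distrib]
  | mul_X p j hp =>
      rw [hleib_right f p (X j), hp, key f j]
      have hx : ∀ x : Fin n, pderiv x (p * X j)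
          = pderiv x p * X j + p * (if j = x then 1 else 0) := fun x => by
        rw [pderiv_mul, pderiv_X, Pi.single_apply]
      simp_rw [hx, mul_add, ← mul_assoc, mul_ite, mul_one, mul_zero,
        Finset.sum_add_distrib, Finset.sum_ite_eq, Finset.mem_univ, if_true,
        Finset.sum_mul, Finset.mul_sum]
      congr 1
      exact Finset.sum_congr rfl fun i _ => Finset.sum_congr rfl fun x _ => by ring
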